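/- Under Assumption 1: (i) for each fixed μ ∈ [0,1), if 0 ≤ z₁ < z₂ ≤ 1 and h(z₂, μ) ≤ 0, then g(z₁, μ) < g(z₂, μ); (ii) for each fixed z ∈ [0,1), if 0 ≤ μ₁ < μ₂ < 1 and h(z, μ₂) ≤ 0, then g(z, μ₁) < g(z, μ₂). That is, g is strictly increasing in each argument on the region where h is nonpositive. -/

import Mathlib

/-- Effective infection rate β_eff(z_S, z_I, μ_S). -/
noncomputable def betaEff (a bP bU zS zI m : ℝ) : ℝ :=
  (bP + (bU - bP) * zI) * (a + (1 - a) * (zS * m + zI * (1 - m)))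

/-- Endemic infection level y_EE(z_S, z_I, μ_S). -/
noncomputable def yEE (a gam bP bU zS zI m : ℝ) : ℝ :=
  1 - gam / betaEff a bP bU zS zI m

/-- The function h(z_I, μ_S). -/
noncomputable def hFun (a gam bP bU L CP zI m : ℝ) : ℝ :=
  (1 - a) * L * (bP + (bU - bP) * zI) * yEE a gam bP bU 1 zI m - CP

/-- The function g(z_I, μ_S). -/
noncomputable def gFun (a gam bP bU L CP CU zI m : ℝ) : ℝ :=
  yEE a gam bP bU 1 zI m * (CU - CP)
    - (1 - m) * (1 - yEE a gam bP bU 1 zI m) * (-(hFun a gam bP bU L CP zI m))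

/-- Expected-utility difference ΔU[S̄]. -/
noncomputable def dUS (a bP bU L CP y zI : ℝ) : ℝ :=
  (1 - a) * L * (bP + (bU - bP) * zI) * y - CP

/-- Expected-utility difference ΔU[Ī]. -/
noncomputable def dUI (a bP bU L CP CU m y zI : ℝ) : ℝ :=
  ((1 - m) * (1 - y) / (y + (1 - m) * (1 - y))) *
    ((1 - a) * L * (bP + (bU - bP) * zI) * y - CU) + CU - CP

/-- Stationary Nash equilibrium for signal μ_S = m. -/
def IsSNE (a gam bP bU L CP CU m y zS zI : ℝ) : Prop :=
  y ∈ Set.Ioo (0:ℝ) 1 ∧ zS ∈ Set.Icc (0:ℝ) 1 ∧ zI ∈ Set.Icc (0:ℝ) 1 ∧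
  gam < betaEff a bP bU zS zI m ∧
  y = yEE a gam bP bU zS zI m ∧
  (0 < dUS a bP bU L CP y zI → zS = 0) ∧
  (dUS a bP bU L CP y zI < 0 → zS = 1) ∧
  (0 < dUI a bP bU L CP CU m y zI → zI = 0) ∧
  (dUI a bP bU L CP CU m y zI < 0 → zI = 1)

/-- Characterization of μ_S^max. -/
def IsMuMax (a gam bP bU L CP CU mmax : ℝ) : Prop :=
  (0 ≤ gFun a gam bP bU L CP CU 0 0 ∧ mmax = 0) ∨
  (gFun a gam bP bU L CP CU 0 0 < 0 ∧ mmax ∈ Set.Ioo (0:ℝ) 1 ∧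
    gFun a gam bP bU L CP CU 0 mmax = 0)

/-- The threshold μ_S^min. -/
noncomputable def muMin (a gam bU L CP CU : ℝ) : ℝ :=
  1 - (bU - gam) * (CU - CP) / (gam * (CP - (1 - a) * L * (bU - gam)))

lemma gFun_eq (a gam bP bU L CP CU z m : ℝ) :
    gFun a gam bP bU L CP CU z m =
      yEE a gam bP bU 1 z m * (CU - CP)
        + (1 - m) * (gam / betaEff a bP bU 1 z m) * hFun a gam bP bU L CP z m := by
  simp only [gFun, yEE, hFun, betaEff]
  ring

lemma h_sub (x y g : ℝ) (hx : x ≠ 0) (hy : y ≠ 0) :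
    x * (1 - g / (x * y)) = x - g / y := by
  field_simp

lemma hFun_eq (a gam bP bU L CP z m : ℝ)
    (hB : (bP + (bU - bP) * z) ≠ 0) (hA : (a + (1 - a) * (1 * m + z * (1 - m))) ≠ 0) :
    hFun a gam bP bU L CP z m =
      (1 - a) * L * ((bP + (bU - bP) * z) - gam / (a + (1 - a) * (1 * m + z * (1 - m)))) - CP := by
  simp only [hFun, yEE, betaEff]
  rw [mul_assoc ((1 - a) * L), h_sub _ _ _ hB hA]

lemma aux_core (C t₁ t₂ y₁ y₂ h₁ h₂ : ℝ) (hC : 0 < C) (hy : y₁ < y₂)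
    (hh : h₁ ≤ h₂) (hh2 : h₂ ≤ 0) (ht2 : 0 < t₂) (ht : t₂ ≤ t₁) :
    y₁ * C + t₁ * h₁ < y₂ * C + t₂ * h₂ := by
  nlinarith [mul_nonneg (sub_nonneg.2 ht) (neg_nonneg.2 (hh.trans hh2)),
    mul_le_mul_of_nonneg_left hh ht2.le]

set_option maxHeartbeats 1000000 in
lemma main_lemma (a gam bP bU L CP CU z₁ z₂ m₁ m₂ : ℝ)
    (ha : 0 < a) (ha1 : a < 1) (hgam : 0 < gam)
    (hbP : 0 < bP) (hbPU : bP < bU) (hbU1 : bU < 1)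
    (hL : 0 < L) (hCP : 0 < CP) (hCPU : CP < CU) (hA1 : gam < a * bP)
    (hz1 : 0 ≤ z₁) (hz12 : z₁ ≤ z₂) (hz2 : z₂ ≤ 1)
    (hm1 : 0 ≤ m₁) (hm12 : m₁ ≤ m₂) (hm2 : m₂ < 1)
    (hstrict : (bP + (bU - bP) * z₁) * (a + (1 - a) * (1 * m₁ + z₁ * (1 - m₁)))
      < (bP + (bU - bP) * z₂) * (a + (1 - a) * (1 * m₂ + z₂ * (1 - m₂))))
    (hh : hFun a gam bP bU L CP z₂ m₂ ≤ 0) :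
    gFun a gam bP bU L CP CU z₁ m₁ < gFun a gam bP bU L CP CU z₂ m₂ := by
  obtain ⟨B₁, hB₁def⟩ : ∃ x : ℝ, x = bP + (bU - bP) * z₁ := ⟨_, rfl⟩
  obtain ⟨B₂, hB₂def⟩ : ∃ x : ℝ, x = bP + (bU - bP) * z₂ := ⟨_, rfl⟩
  obtain ⟨A₁, hA₁def⟩ : ∃ x : ℝ, x = a + (1 - a) * (1 * m₁ + z₁ * (1 - m₁)) := ⟨_, rfl⟩
  obtain ⟨A₂, hA₂def⟩ : ∃ x : ℝ, x = a + (1 - a) * (1 * m₂ + z₂ * (1 - m₂)) := ⟨_, rfl⟩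
  rw [← hB₁def, ← hB₂def, ← hA₁def, ← hA₂def] at hstrict
  have hm11 : m₁ < 1 := lt_of_le_of_lt hm12 hm2
  have hB1l : bP ≤ B₁ := by rw [hB₁def]; nlinarith
  have hB12 : B₁ ≤ B₂ := by rw [hB₁def, hB₂def]; nlinarith
  have hB2u : B₂ ≤ bU := by rw [hB₂def]; nlinarith
  have e1 : (0:ℝ) ≤ (1 - a) * (m₁ * (1 - z₁)) :=
    mul_nonneg (by linarith) (mul_nonneg hm1 (by nlinarith))
  have e1' : (0:ℝ) ≤ (1 - a) * z₁ := mul_nonneg (by linarith) hz1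
  have hA1l : a ≤ A₁ := by
    rw [hA₁def]; linarith [e1, e1']
  have e2 : (0:ℝ) ≤ (1 - a) * ((m₂ - m₁) * (1 - z₁)) :=
    mul_nonneg (by linarith) (mul_nonneg (by linarith) (by nlinarith))
  have e3 : (0:ℝ) ≤ (1 - a) * ((z₂ - z₁) * (1 - m₂)) :=
    mul_nonneg (by linarith) (mul_nonneg (by linarith) (by linarith))
  have hA12 : A₁ ≤ A₂ := by
    rw [hA₁def, hA₂def]; linarith [e2, e3]
  have e4 : (0:ℝ) ≤ (1 - a) * ((1 - m₂) * (1 - z₂)) :=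
    mul_nonneg (by linarith) (mul_nonneg (by linarith) (by linarith))
  have hA2u : A₂ ≤ 1 := by
    rw [hA₂def]; linarith [e4]
  have hB1pos : 0 < B₁ := lt_of_lt_of_le hbP hB1l
  have hB2pos : 0 < B₂ := lt_of_lt_of_le hB1pos hB12
  have hA1pos : 0 < A₁ := lt_of_lt_of_le ha hA1l
  have hA2pos : 0 < A₂ := lt_of_lt_of_le hA1pos hA12
  have hgD1 : gam < B₁ * A₁ := by
    rw [mul_comm]
    exact lt_of_lt_of_le hA1 (mul_le_mul hA1l hB1l hbP.le hA1pos.le)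
  have hD1pos : 0 < B₁ * A₁ := lt_trans hgam hgD1
  have hD2pos : 0 < B₂ * A₂ := lt_trans hD1pos hstrict
  have hD2u : B₂ * A₂ < 1 := by
    have h1 : B₂ * A₂ ≤ bU * 1 := mul_le_mul hB2u hA2u hA2pos.le (by linarith)
    linarith
  have hbeta1 : betaEff a bP bU 1 z₁ m₁ = B₁ * A₁ := by rw [betaEff, hB₁def, hA₁def]
  have hbeta2 : betaEff a bP bU 1 z₂ m₂ = B₂ * A₂ := by rw [betaEff, hB₂def, hA₂def]
  -- y comparison
  have hy12 : yEE a gam bP bU 1 z₁ m₁ < yEE a gam bP bU 1 z₂ m₂ := by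
    simp only [yEE, hbeta1, hbeta2]
    have := div_lt_div_of_pos_left hgam hD1pos hstrict
    linarith
  -- h comparison
  have hfrac : gam / A₂ ≤ gam / A₁ := by
    apply div_le_div_of_nonneg_left hgam.le hA1pos hA12
  have hh12 : hFun a gam bP bU L CP z₁ m₁ ≤ hFun a gam bP bU L CP z₂ m₂ := by
    rw [hFun_eq a gam bP bU L CP z₁ m₁ (hB₁def ▸ hB1pos).ne' (hA₁def ▸ hA1pos).ne',
        hFun_eq a gam bP bU L CP z₂ m₂ (hB₂def ▸ hB2pos).ne' (hA₂def ▸ hA2pos).ne']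
    have hc : 0 ≤ (1 - a) * L := mul_nonneg (by linarith) hL.le
    have : B₁ - gam / A₁ ≤ B₂ - gam / A₂ := by linarith
    have h2 := mul_le_mul_of_nonneg_left this hc
    rw [← hA₁def, ← hA₂def, ← hB₁def, ← hB₂def]
    linarith
  -- t comparison
  have ht2pos : 0 < (1 - m₂) * (gam / betaEff a bP bU 1 z₂ m₂) := by
    rw [hbeta2]
    exact mul_pos (by linarith) (div_pos hgam hD2pos)
  have ht21 : (1 - m₂) * (gam / betaEff a bP bU 1 z₂ m₂)
      ≤ (1 - m₁) * (gam / betaEff a bP bU 1 z₁ m₁) := by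
    rw [hbeta1, hbeta2]
    apply mul_le_mul (by linarith) (div_le_div_of_nonneg_left hgam.le hD1pos hstrict.le)
      (div_pos hgam hD2pos).le (by linarith)
  rw [gFun_eq, gFun_eq]
  exact aux_core (CU - CP) _ _ _ _ _ _ (by linarith) hy12 hh12 hh ht2pos ht21

theorem stmt13
    (a gam bP bU L CP CU : ℝ)
    (ha : a ∈ Set.Ioo (0:ℝ) 1) (hgam : gam ∈ Set.Ioo (0:ℝ) 1)
    (hbP : 0 < bP) (hbPU : bP < bU) (hbU1 : bU < 1)
    (hL : 0 < L) (hCP : 0 < CP) (hCPU : CP < CU)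
    (hA1 : gam < a * bP) :
    (∀ m ∈ Set.Ico (0:ℝ) 1, ∀ z₁ z₂ : ℝ,
      0 ≤ z₁ → z₁ < z₂ → z₂ ≤ 1 → hFun a gam bP bU L CP z₂ m ≤ 0 →
        gFun a gam bP bU L CP CU z₁ m < gFun a gam bP bU L CP CU z₂ m) ∧
    (∀ z ∈ Set.Ico (0:ℝ) 1, ∀ m₁ m₂ : ℝ,
      0 ≤ m₁ → m₁ < m₂ → m₂ < 1 → hFun a gam bP bU L CP z m₂ ≤ 0 →
        gFun a gam bP bU L CP CU z m₁ < gFun a gam bP bU L CP CU z m₂) := by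
  obtain ⟨ha0, ha1⟩ := ha
  obtain ⟨hg0, hg1⟩ := hgam
  constructor
  · rintro m ⟨hm0, hm1⟩ z₁ z₂ hz1 hz12 hz2 hh
    apply main_lemma a gam bP bU L CP CU z₁ z₂ m m ha0 ha1 hg0 hbP hbPU hbU1 hL hCP hCPU hA1
      hz1 hz12.le hz2 hm0 le_rfl hm1 _ hh
    have hB12 : bP + (bU - bP) * z₁ < bP + (bU - bP) * z₂ := by nlinarith
    have hA12 : a + (1 - a) * (1 * m + z₁ * (1 - m)) ≤ a + (1 - a) * (1 * m + z₂ * (1 - m)) := by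
      nlinarith [mul_nonneg (mul_nonneg (sub_nonneg.2 ha1.le) (sub_nonneg.2 hz12.le)) (sub_nonneg.2 hm1.le)]
    have hA1pos : 0 < a + (1 - a) * (1 * m + z₁ * (1 - m)) := by
      have : (0:ℝ) ≤ (1 - a) * (1 * m + z₁ * (1 - m)) :=
        mul_nonneg (by linarith) (by nlinarith [mul_nonneg hz1 (sub_nonneg.2 hm1.le)])
      linarith
    have hB2pos : 0 < bP + (bU - bP) * z₂ := by nlinarith
    nlinarith
  · rintro z ⟨hz0, hz1⟩ m₁ m₂ hm1 hm12 hm2 hh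
    apply main_lemma a gam bP bU L CP CU z z m₁ m₂ ha0 ha1 hg0 hbP hbPU hbU1 hL hCP hCPU hA1
      hz0 le_rfl hz1.le hm1 hm12.le hm2 _ hh
    have hBpos : 0 < bP + (bU - bP) * z := by nlinarith
    have hA12 : a + (1 - a) * (1 * m₁ + z * (1 - m₁)) < a + (1 - a) * (1 * m₂ + z * (1 - m₂)) := by
      nlinarith [mul_pos (mul_pos (sub_pos.2 ha1) (sub_pos.2 hm12)) (sub_pos.2 hz1)]
    nlinarith [mul_lt_mul_of_pos_left hA12 hBpos]
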